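/- Let s be weakly increasing with first-order differences in {0,1}. If x^1 ⪰_lex x^2 ⪰_lex ... ⪰_lex x^k are lattice points of A_n^s ∩ ℤ^{n+1} that are pairwise minimal (every pair {x^i, x^j} is minimal), then the whole collection {x^1,...,x^k} is minimal: for any other multiset {u^1,...,u^k} of lattice points of A_n^s with the same sum, the lexicographically sorted sequence (x^1,...,x^k) is lexicographically smallest. -/

import Mathlib

open Finset

/-- The polytope `A_n^s ⊂ ℝ^{n+1}`, modeled by functions `ℕ → ℝ` supported on `[1, n+1]`. -/
def Ans (n : ℕ) (s : ℕ → ℤ) : Set (ℕ → ℝ) :=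
  {y | (∀ i : ℕ, (i = 0 ∨ n + 1 < i) → y i = 0) ∧
       (∀ j ∈ Finset.Icc 1 n, 0 ≤ ∑ i ∈ Finset.Icc 1 j, y i ∧
          ∑ i ∈ Finset.Icc 1 j, y i ≤ (s j : ℝ)) ∧
       (∀ j ∈ Finset.Icc 1 (n - 1),
          0 ≤ ((s (j + 1) - s j : ℤ) : ℝ) * ∑ i ∈ Finset.Icc 1 j, y i ∧
          ((s (j + 1) - s j : ℤ) : ℝ) * ∑ i ∈ Finset.Icc 1 j, y i ≤ (s j : ℝ) * y (j + 1)) ∧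
       ∑ i ∈ Finset.Icc 1 (n + 1), y i = (s (n + 1) : ℝ)}

/-- The lattice points of `A_n^s`. -/
def AnsZ (n : ℕ) (s : ℕ → ℤ) : Set (ℕ → ℤ) :=
  {z | (fun i => (z i : ℝ)) ∈ Ans n s}

/-- Lexicographic order: `x ≺_lex y` iff at the first index where they differ, `x` is smaller. -/
def LexLt (x y : ℕ → ℤ) : Prop := ∃ j : ℕ, x j < y j ∧ ∀ i < j, x i = y i

def LexGe (x y : ℕ → ℤ) : Prop := x = y ∨ LexLt y x

/-- The pair `{x, x'}` (with `x ⪰_lex x'`) is minimal: no pair `{u, v}` of lattice points of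
`A_n^s` with the same sum is lexicographically smaller (comparing sorted pairs, smaller
elements first). -/
def PairMinimal (A : Set (ℕ → ℤ)) (x x' : ℕ → ℤ) : Prop :=
  ¬ ∃ u v : ℕ → ℤ, u ∈ A ∧ v ∈ A ∧ LexGe u v ∧ u + v = x + x' ∧
      (LexLt v x' ∨ (v = x' ∧ LexLt u x))

/-- Comparison of lexicographically-decreasingly sorted `k`-tuples from the last (smallest)
position: `u` is smaller than `x` iff at the largest index where they differ, the entry of `u`
is lexicographically smaller. -/
def SeqLt (k : ℕ) (u x : Fin k → (ℕ → ℤ)) : Prop :=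
  ∃ m : Fin k, LexLt (u m) (x m) ∧ ∀ j : Fin k, m < j → u j = x j

/-! ### Auxiliary machinery: integer prefix sums -/

def pf (z : ℕ → ℤ) (c : ℕ) : ℤ := ∑ i ∈ Finset.Icc 1 c, z i

lemma pf_zero (z : ℕ → ℤ) : pf z 0 = 0 := by simp [pf]

lemma pf_succ (z : ℕ → ℤ) (c : ℕ) : pf z (c+1) = pf z c + z (c+1) := by
  rw [pf, pf, Finset.sum_Icc_succ_top (by omega : 1 ≤ c+1)]

lemma pf_congr_le {z w : ℕ → ℤ} {e : ℕ} (h : ∀ i, 1 ≤ i → i ≤ e → z i = w i) :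
    pf z e = pf w e := by
  unfold pf
  exact Finset.sum_congr rfl (fun i hi => h i (Finset.mem_Icc.mp hi).1 (Finset.mem_Icc.mp hi).2)

lemma mem_AnsZ {n : ℕ} {s : ℕ → ℤ} {z : ℕ → ℤ} :
    z ∈ AnsZ n s ↔
      ((∀ i : ℕ, (i = 0 ∨ n + 1 < i) → z i = 0) ∧
       (∀ j ∈ Finset.Icc 1 n, 0 ≤ pf z j ∧ pf z j ≤ s j) ∧
       (∀ j ∈ Finset.Icc 1 (n - 1),
          0 ≤ (s (j + 1) - s j) * pf z j ∧
          (s (j + 1) - s j) * pf z j ≤ s j * z (j + 1)) ∧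
       pf z (n + 1) = s (n + 1)) := by
  unfold AnsZ Ans pf
  simp only [Set.mem_setOf_eq]
  norm_cast

lemma pf_stable {n : ℕ} {z : ℕ → ℤ} (hsupp : ∀ i : ℕ, (i = 0 ∨ n + 1 < i) → z i = 0) :
    ∀ d, n + 1 ≤ d → pf z d = pf z (n+1) := by
  intro d hd
  induction d with
  | zero => omega
  | succ e ih =>
    rcases Nat.lt_or_ge e (n+1) with h | h
    · have he : n + 1 = e + 1 := by omega
      rw [he]
    · rw [pf_succ, ih h, hsupp (e+1) (by omega)]; ring

lemma lexle_of_pf {n : ℕ} {z w : ℕ → ℤ}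
    (hz : ∀ i : ℕ, (i = 0 ∨ n + 1 < i) → z i = 0)
    (hw : ∀ i : ℕ, (i = 0 ∨ n + 1 < i) → w i = 0)
    (h : ∀ d, pf z d ≤ pf w d) :
    z = w ∨ LexLt z w := by
  by_cases hzw : z = w
  · exact Or.inl hzw
  right
  have hne : ∃ d, z d ≠ w d := by
    by_contra hcon; push_neg at hcon; exact hzw (funext hcon)
  classical
  set d0 := Nat.find hne with hd0def
  have hd0 : z d0 ≠ w d0 := Nat.find_spec hne
  have hbelow : ∀ i < d0, z i = w i := by
    intro i hi
    by_contra hcc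
    exact (Nat.find_min hne hi) hcc
  have hz0 : z 0 = w 0 := by rw [hz 0 (Or.inl rfl), hw 0 (Or.inl rfl)]
  have hd0pos : 1 ≤ d0 := by
    rcases Nat.eq_zero_or_pos d0 with h0 | h0
    · exact absurd (h0 ▸ hz0) (h0 ▸ hd0)
    · exact h0
  clear_value d0
  obtain ⟨e, rfl⟩ : ∃ e, d0 = e + 1 := ⟨d0 - 1, by omega⟩
  have hpe : pf z e = pf w e := pf_congr_le (fun i h1 h2 => hbelow i (by omega))
  have hle := h (e+1)
  rw [pf_succ, pf_succ, hpe] at hle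
  exact ⟨e+1, lt_of_le_of_ne (by linarith) hd0, hbelow⟩

lemma pf_of_g {n : ℕ} (g : ℕ → ℤ) (hg0 : g 0 = 0) :
    ∀ c, c ≤ n+1 → pf (fun d => if 1 ≤ d ∧ d ≤ n+1 then g d - g (d-1) else 0) c = g c := by
  intro c hc
  induction c with
  | zero => rw [pf_zero, hg0]
  | succ e ih =>
    rw [pf_succ, ih (by omega)]
    have hcnd : 1 ≤ e + 1 ∧ e + 1 ≤ n + 1 := ⟨by omega, hc⟩
    simp only [hcnd, and_self, if_true, Nat.add_sub_cancel]
    ring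

/-- Key structural lemma: in a minimal pair, at every coordinate the bottom prefix sum is `0`
or the top prefix sum is saturated. -/
lemma step1 {n : ℕ} {s : ℕ → ℤ} (hn : 0 < n)
    (hpos : ∀ i ∈ Finset.Icc 1 n, 0 < s i)
    (hdiff : ∀ i ∈ Finset.Icc 1 (n - 1), s (i + 1) - s i = 0 ∨ s (i + 1) - s i = 1)
    (hsn1 : s (n + 1) = s n + 1)
    {a b : ℕ → ℤ} (ha : a ∈ AnsZ n s) (hb : b ∈ AnsZ n s)
    (hmin : PairMinimal (AnsZ n s) a b)
    {c : ℕ} (hc1 : 1 ≤ c) (hc2 : c ≤ n) :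
    pf b c = 0 ∨ pf a c = s c := by
  by_contra hcon
  push_neg at hcon
  obtain ⟨hbc, hac⟩ := hcon
  obtain ⟨haS, haB, haC, haT⟩ := mem_AnsZ.mp ha
  obtain ⟨hbS, hbB, hbC, hbT⟩ := mem_AnsZ.mp hb
  have hspos : ∀ j, 1 ≤ j → j ≤ n → (0:ℤ) < s j := fun j h1 h2 =>
    hpos j (Finset.mem_Icc.mpr ⟨h1, h2⟩)
  have hsn1pos : (0:ℤ) < s (n+1) := by have := hspos n hn le_rfl; omega
  set τ : ℕ → ℤ := fun d => pf a d + pf b d with hτdef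
  have hτ0 : τ 0 = 0 := by simp [hτdef, pf_zero]
  have haB' : ∀ j, 1 ≤ j → j ≤ n → 0 ≤ pf a j ∧ pf a j ≤ s j := fun j h1 h2 =>
    haB j (Finset.mem_Icc.mpr ⟨h1, h2⟩)
  have hbB' : ∀ j, 1 ≤ j → j ≤ n → 0 ≤ pf b j ∧ pf b j ≤ s j := fun j h1 h2 =>
    hbB j (Finset.mem_Icc.mpr ⟨h1, h2⟩)
  have hτlh : ∀ j, 1 ≤ j → j ≤ n → 0 ≤ τ j ∧ τ j ≤ 2 * s j := by
    intro j h1 h2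
    obtain ⟨x1, x2⟩ := haB' j h1 h2
    obtain ⟨y1, y2⟩ := hbB' j h1 h2
    constructor <;> [skip; skip] <;> simp only [hτdef] <;> omega
  have hτtop : τ (n+1) = 2 * s (n+1) := by simp only [hτdef]; rw [haT, hbT]; ring
  have hcoup : ∀ j, 1 ≤ j → j ≤ n - 1 →
      (s (j+1) - s j) * τ j ≤ s j * (τ (j+1) - τ j) := by
    intro j h1 h2
    have hA := (haC j (Finset.mem_Icc.mpr ⟨h1, h2⟩)).2
    have hB := (hbC j (Finset.mem_Icc.mpr ⟨h1, h2⟩)).2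
    have e1 : τ (j+1) = τ j + (a (j+1) + b (j+1)) := by
      simp only [hτdef]; rw [pf_succ, pf_succ]; ring
    have e2 : τ j = pf a j + pf b j := by simp only [hτdef]
    rw [e1, e2]
    linarith [hA, hB]
  set Q : ℕ → ℤ := fun d => if d = 0 then 0 else max 0 (τ d - s d) with hQdef
  set R : ℕ → ℤ := fun d => if d = 0 then 0 else min (τ d) (s d) with hRdef
  have hQ0 : Q 0 = 0 := by simp [hQdef]
  have hR0 : R 0 = 0 := by simp [hRdef]
  have hQd : ∀ d, 1 ≤ d → Q d = max 0 (τ d - s d) := by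
    intro d hd; simp only [hQdef]; rw [if_neg (by omega)]
  have hRd : ∀ d, 1 ≤ d → R d = min (τ d) (s d) := by
    intro d hd; simp only [hRdef]; rw [if_neg (by omega)]
  set v : ℕ → ℤ := fun d => if 1 ≤ d ∧ d ≤ n+1 then Q d - Q (d-1) else 0 with hvdef
  set u : ℕ → ℤ := fun d => if 1 ≤ d ∧ d ≤ n+1 then R d - R (d-1) else 0 with hudef
  have hvS : ∀ i : ℕ, (i = 0 ∨ n + 1 < i) → v i = 0 := by
    intro i hi; simp only [hvdef]; rw [if_neg (by omega)]
  have huS : ∀ i : ℕ, (i = 0 ∨ n + 1 < i) → u i = 0 := by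
    intro i hi; simp only [hudef]; rw [if_neg (by omega)]
  have hpfv : ∀ d, d ≤ n+1 → pf v d = Q d := by
    intro d hd; rw [hvdef]; exact pf_of_g Q hQ0 d hd
  have hpfu : ∀ d, d ≤ n+1 → pf u d = R d := by
    intro d hd; rw [hudef]; exact pf_of_g R hR0 d hd
  have hvT : pf v (n+1) = s (n+1) := by
    rw [hpfv (n+1) le_rfl, hQd (n+1) (by omega)]
    have h1 : τ (n+1) - s (n+1) = s (n+1) := by omega
    rw [h1]; exact max_eq_right hsn1pos.le
  have huT : pf u (n+1) = s (n+1) := by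
    rw [hpfu (n+1) le_rfl, hRd (n+1) (by omega), hτtop]
    exact min_eq_right (by omega)
  have hvB : ∀ j ∈ Finset.Icc 1 n, 0 ≤ pf v j ∧ pf v j ≤ s j := by
    intro j hj
    obtain ⟨h1, h2⟩ := Finset.mem_Icc.mp hj
    rw [hpfv j (by omega), hQd j h1]
    obtain ⟨hl, hh⟩ := hτlh j h1 h2
    have := hspos j h1 h2
    exact ⟨le_max_left _ _, max_le (by omega) (by omega)⟩
  have huB : ∀ j ∈ Finset.Icc 1 n, 0 ≤ pf u j ∧ pf u j ≤ s j := by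
    intro j hj
    obtain ⟨h1, h2⟩ := Finset.mem_Icc.mp hj
    rw [hpfu j (by omega), hRd j h1]
    obtain ⟨hl, hh⟩ := hτlh j h1 h2
    have := hspos j h1 h2
    exact ⟨le_min hl (by omega), min_le_right _ _⟩
  have hvC : ∀ j ∈ Finset.Icc 1 (n - 1),
      0 ≤ (s (j + 1) - s j) * pf v j ∧
      (s (j + 1) - s j) * pf v j ≤ s j * v (j + 1) := by
    intro j hj
    obtain ⟨h1, h2⟩ := Finset.mem_Icc.mp hj
    have hj1n : j + 1 ≤ n := by omega
    have hvj1 : v (j+1) = Q (j+1) - Q j := by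
      simp only [hvdef]; rw [if_pos ⟨by omega, by omega⟩]
      simp only [Nat.add_sub_cancel]
    rw [hpfv j (by omega), hvj1, hQd j h1, hQd (j+1) (by omega)]
    have hcp := hcoup j h1 h2
    obtain ⟨hl, hh⟩ := hτlh j h1 (by omega)
    obtain ⟨hl1, hh1⟩ := hτlh (j+1) (by omega) hj1n
    have hsj := hspos j h1 (by omega)
    rcases hdiff j (Finset.mem_Icc.mpr ⟨h1, h2⟩) with hd0 | hd1
    · -- flat step
      have hse : s (j+1) = s j := by omega
      rw [hd0] at hcp ⊢
      rw [hse]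
      have hτmono : τ j ≤ τ (j+1) := by
        have := (mul_le_mul_iff_right₀ hsj).mp (show s j * 0 ≤ s j * (τ (j+1) - τ j) by linarith [hcp])
        linarith
      have hQmono : max 0 (τ j - s j) ≤ max 0 (τ (j+1) - s j) :=
        max_le (le_max_left _ _) (le_trans (by omega) (le_max_right _ _))
      have := mul_nonneg hsj.le (sub_nonneg.mpr hQmono)
      constructor
      · simp
      · linarith
    · -- up step
      have hse : s (j+1) = s j + 1 := by omega
      rw [hd1] at hcp ⊢
      rw [hse]
      have hkey : (s j + 1) * τ j ≤ s j * τ (j+1) := by linarith [hcp]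
      constructor
      · linarith [le_max_left (0:ℤ) (τ j - s j)]
      · rcases le_or_gt (τ j - s j) 0 with hle | hlt
        · rw [max_eq_left hle]
          have h0 : (0:ℤ) ≤ max 0 (τ (j+1) - (s j + 1)) := le_max_left _ _
          linarith [mul_nonneg hsj.le h0]
        · rw [max_eq_right hlt.le]
          have h1' : τ (j+1) - (s j + 1) ≤ max 0 (τ (j+1) - (s j + 1)) := le_max_right _ _
          linarith [mul_le_mul_of_nonneg_left h1' hsj.le, hkey]
  have huC : ∀ j ∈ Finset.Icc 1 (n - 1),
      0 ≤ (s (j + 1) - s j) * pf u j ∧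
      (s (j + 1) - s j) * pf u j ≤ s j * u (j + 1) := by
    intro j hj
    obtain ⟨h1, h2⟩ := Finset.mem_Icc.mp hj
    have hj1n : j + 1 ≤ n := by omega
    have huj1 : u (j+1) = R (j+1) - R j := by
      simp only [hudef]; rw [if_pos ⟨by omega, by omega⟩]
      simp only [Nat.add_sub_cancel]
    rw [hpfu j (by omega), huj1, hRd j h1, hRd (j+1) (by omega)]
    have hcp := hcoup j h1 h2
    obtain ⟨hl, hh⟩ := hτlh j h1 (by omega)
    obtain ⟨hl1, hh1⟩ := hτlh (j+1) (by omega) hj1n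
    have hsj := hspos j h1 (by omega)
    rcases hdiff j (Finset.mem_Icc.mpr ⟨h1, h2⟩) with hd0 | hd1
    · have hse : s (j+1) = s j := by omega
      rw [hd0] at hcp ⊢
      rw [hse]
      have hτmono : τ j ≤ τ (j+1) := by
        have := (mul_le_mul_iff_right₀ hsj).mp (show s j * 0 ≤ s j * (τ (j+1) - τ j) by linarith [hcp])
        linarith
      have hRmono : min (τ j) (s j) ≤ min (τ (j+1)) (s j) := min_le_min hτmono le_rfl
      have := mul_nonneg hsj.le (sub_nonneg.mpr hRmono)
      constructor
      · simp
      · linarith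
    · have hse : s (j+1) = s j + 1 := by omega
      rw [hd1] at hcp ⊢
      rw [hse]
      have hkey : (s j + 1) * τ j ≤ s j * τ (j+1) := by linarith [hcp]
      have hminpos : (0:ℤ) ≤ min (τ j) (s j) := le_min hl hsj.le
      constructor
      · linarith
      · rcases le_total (τ j) (s j) with hts | hts
        · rw [min_eq_left hts]
          rcases le_total (τ (j+1)) (s j + 1) with h2' | h2'
          · rw [min_eq_left h2']
            linarith [hkey]
          · rw [min_eq_right h2']
            linarith [mul_nonneg hsj.le (sub_nonneg.mpr hts)]
        · rw [min_eq_right hts]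
          have hτ1 : s j + 1 ≤ τ (j+1) := by
            by_contra hcon2
            push_neg at hcon2
            have h5 : τ (j+1) ≤ s j := by omega
            have h6 : s j * τ (j+1) ≤ s j * s j := mul_le_mul_of_nonneg_left h5 hsj.le
            have h7 : (s j + 1) * s j ≤ (s j + 1) * τ j :=
              mul_le_mul_of_nonneg_left hts (by linarith)
            linarith [hkey]
          rw [min_eq_right hτ1]
          linarith
  have hvA : v ∈ AnsZ n s := mem_AnsZ.mpr ⟨hvS, hvB, hvC, hvT⟩
  have huA : u ∈ AnsZ n s := mem_AnsZ.mpr ⟨huS, huB, huC, huT⟩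
  have hRQ : ∀ e, R e + Q e = τ e := by
    intro e
    rcases Nat.eq_zero_or_pos e with rfl | he
    · rw [hR0, hQ0, hτ0]; ring
    · rw [hQd e he, hRd e he]
      rcases le_total (τ e) (s e) with h | h
      · rw [min_eq_left h, max_eq_left (by omega)]; ring
      · rw [min_eq_right h, max_eq_right (by omega)]; ring
  have husum : u + v = a + b := by
    funext d
    simp only [Pi.add_apply]
    by_cases hd : 1 ≤ d ∧ d ≤ n+1
    · obtain ⟨e, rfl⟩ : ∃ e, d = e + 1 := ⟨d - 1, by omega⟩
      simp only [hudef, hvdef]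
      rw [if_pos hd, if_pos hd]
      simp only [Nat.add_sub_cancel]
      have h1 := hRQ (e+1)
      have h2 := hRQ e
      have h3 : τ (e+1) = τ e + (a (e+1) + b (e+1)) := by
        simp only [hτdef]; rw [pf_succ, pf_succ]; ring
      linarith
    · simp only [hudef, hvdef]
      rw [if_neg hd, if_neg hd]
      have hda := haS d (by omega)
      have hdb := hbS d (by omega)
      omega
  have hQleR : ∀ d, pf v d ≤ pf u d := by
    intro d
    rcases le_or_gt d n with hdn | hdn
    · rw [hpfv d (by omega), hpfu d (by omega)]
      rcases Nat.eq_zero_or_pos d with rfl | hd1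
      · rw [hQ0, hR0]
      · obtain ⟨hl, hh⟩ := hτlh d hd1 hdn
        have := hspos d hd1 hdn
        rw [hQd d hd1, hRd d hd1]
        exact max_le (le_min hl this.le) (le_min (by omega) (by omega))
    · have h1 : pf v d = s (n+1) := by
        rw [pf_stable hvS d (by omega), hvT]
      have h2 : pf u d = s (n+1) := by
        rw [pf_stable huS d (by omega), huT]
      omega
  have hge : LexGe u v := by
    rcases lexle_of_pf hvS huS hQleR with h | h
    · exact Or.inl h.symm
    · exact Or.inr h
  have hvb : ∀ d, pf v d ≤ pf b d := by
    intro d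
    rcases le_or_gt d n with hdn | hdn
    · rw [hpfv d (by omega)]
      rcases Nat.eq_zero_or_pos d with rfl | hd1
      · rw [hQ0, pf_zero]
      · obtain ⟨hal, hah⟩ := haB' d hd1 hdn
        obtain ⟨hbl, hbh⟩ := hbB' d hd1 hdn
        rw [hQd d hd1]
        have : τ d - s d ≤ pf b d := by simp only [hτdef]; omega
        exact max_le hbl this
    · have h1 : pf v d = s (n+1) := by
        rw [pf_stable hvS d (by omega), hvT]
      have h2 : pf b d = s (n+1) := by
        rw [pf_stable hbS d (by omega), hbT]
      omega
  have hstrict : pf v c < pf b c := by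
    rw [hpfv c (by omega), hQd c hc1]
    obtain ⟨hal, hah⟩ := haB' c hc1 hc2
    obtain ⟨hbl, hbh⟩ := hbB' c hc1 hc2
    have h1 : (0:ℤ) < pf b c := lt_of_le_of_ne hbl (Ne.symm hbc)
    have h2 : τ c - s c < pf b c := by
      have : pf a c < s c := lt_of_le_of_ne hah hac
      simp only [hτdef]; omega
    exact max_lt h1 h2
  have hvneb : v ≠ b := by
    intro h
    rw [h] at hstrict
    exact lt_irrefl _ hstrict
  have hlex : LexLt v b := by
    rcases lexle_of_pf hvS hbS hvb with h | h
    · exact absurd h hvneb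
    · exact h
  exact hmin ⟨u, v, huA, hvA, hge, husum, Or.inl hlex⟩

theorem pairwise_minimal_implies_minimal
    (n : ℕ) (hn : 0 < n) (s : ℕ → ℤ)
    (hpos : ∀ i ∈ Finset.Icc 1 n, 0 < s i)
    (hdiff : ∀ i ∈ Finset.Icc 1 (n - 1), s (i + 1) - s i = 0 ∨ s (i + 1) - s i = 1)
    (hsn1 : s (n + 1) = s n + 1)
    (k : ℕ) (hk : 0 < k) (x : Fin k → (ℕ → ℤ))
    (hx : ∀ i : Fin k, x i ∈ AnsZ n s)
    (hsorted : ∀ i j : Fin k, i ≤ j → LexGe (x i) (x j))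
    (hpairmin : ∀ i j : Fin k, i < j → PairMinimal (AnsZ n s) (x i) (x j)) :
    ∀ u : Fin k → (ℕ → ℤ), (∀ i : Fin k, u i ∈ AnsZ n s) →
      (∀ i j : Fin k, i ≤ j → LexGe (u i) (u j)) →
      (∑ i : Fin k, u i = ∑ i : Fin k, x i) →
      ¬ SeqLt k u x := by
  intro u hu husort hsum hseq
  obtain ⟨m, hlt, htail⟩ := hseq
  obtain ⟨c, hclt, hceq⟩ := hlt
  obtain ⟨humS, humB, -, humT⟩ := mem_AnsZ.mp (hu m)
  obtain ⟨hxmS, hxmB, -, hxmT⟩ := mem_AnsZ.mp (hx m)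
  have hc1 : 1 ≤ c := by
    rcases Nat.eq_zero_or_pos c with rfl | h
    · rw [humS 0 (Or.inl rfl), hxmS 0 (Or.inl rfl)] at hclt
      exact absurd hclt (lt_irrefl 0)
    · exact h
  have hcn1 : c ≤ n + 1 := by
    by_contra h
    rw [humS c (Or.inr (by omega)), hxmS c (Or.inr (by omega))] at hclt
    exact absurd hclt (lt_irrefl 0)
  have hcn : c ≤ n := by
    rcases Nat.lt_or_ge c (n+1) with h | h
    · omega
    · exfalso
      have hcc : c = n + 1 := by omega
      subst hcc
      have hpe : pf (u m) n = pf (x m) n := pf_congr_le (fun i h1 h2 => hceq i (by omega))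
      have h1 : pf (u m) (n+1) = pf (x m) (n+1) := by rw [humT, hxmT]
      rw [pf_succ, pf_succ, hpe] at h1
      omega
  obtain ⟨e, rfl⟩ : ∃ e, c = e + 1 := ⟨c - 1, by omega⟩
  have hpe : pf (u m) e = pf (x m) e := pf_congr_le (fun i h1 h2 => hceq i (by omega))
  have hstrict : pf (u m) (e+1) < pf (x m) (e+1) := by
    rw [pf_succ, pf_succ, hpe]; omega
  have hcol : ∀ w : Fin k → ℕ → ℤ,
      (∑ i : Fin k, pf (w i) (e+1)) = pf (∑ i : Fin k, w i) (e+1) := by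
    intro w
    unfold pf
    simp only [Finset.sum_apply]
    exact Finset.sum_comm
  have hsum' : ∑ i : Fin k, (pf (u i) (e+1) - pf (x i) (e+1)) = 0 := by
    rw [Finset.sum_sub_distrib, hcol u, hcol x, hsum]; ring
  have hexist : ∃ i : Fin k, i < m ∧ pf (x i) (e+1) < pf (u i) (e+1) := by
    by_contra hno
    push_neg at hno
    have hall : ∀ i ∈ Finset.univ (α := Fin k),
        pf (u i) (e+1) - pf (x i) (e+1) ≤ 0 := by
      intro i _
      rcases lt_trichotomy i m with h | h | h
      · have := hno i h; omega
      · subst h; omega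
      · rw [htail i h]; omega
    have hslt : ∑ i : Fin k, (pf (u i) (e+1) - pf (x i) (e+1)) < 0 := by
      have := Finset.sum_lt_sum hall ⟨m, Finset.mem_univ m, by omega⟩
      simpa using this
    omega
  obtain ⟨i, him, hi⟩ := hexist
  have hui := (mem_AnsZ.mp (hu i)).2.1 (e+1) (Finset.mem_Icc.mpr ⟨hc1, hcn⟩)
  have hxmb := hxmB (e+1) (Finset.mem_Icc.mpr ⟨hc1, hcn⟩)
  have humb := humB (e+1) (Finset.mem_Icc.mpr ⟨hc1, hcn⟩)
  rcases step1 hn hpos hdiff hsn1 (hx i) (hx m) (hpairmin i m him) hc1 hcn with h | h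
  · omega
  · omega
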